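/- Let n > 1 and let Φ : ℤⁿ → ℝ be bounded and slowly oscillating. Then the set of partial limits of Φ at infinity, i.e. the set of all c ∈ ℝ such that c = lim_{m→∞} Φ(g(m)) for some sequence g tending to infinity, equals the interval [liminf_{x→∞} Φ(x), limsup_{x→∞} Φ(x)]; in particular it is connected. -/

import Mathlib

open Filter

/-- One unit step between two "safe" points (points with some coordinate of
absolute value greater than `M`). -/
def SOStep (n : ℕ) (M : ℤ) (x y : Fin n → ℤ) : Prop :=
  (∃ i, M < |x i|) ∧ (∃ i, M < |y i|) ∧
    ∃ i, y = x + Pi.single i 1 ∨ x = y + Pi.single i 1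

lemma SOStep.symm_rel {n : ℕ} {M : ℤ} : Symmetric (SOStep n M) := by
  rintro x y ⟨hx, hy, i, h | h⟩
  · exact ⟨hy, hx, i, Or.inr h⟩
  · exact ⟨hy, hx, i, Or.inl h⟩

/-- Moving a single coordinate to an arbitrary value, staying safe thanks to a
fixed other coordinate. -/
lemma so_move {n : ℕ} {M : ℤ} (d : ℕ) :
    ∀ (x : Fin n → ℤ) (i j : Fin n), j ≠ i → M < |x j| →
    ∀ t : ℤ, (t - x i).natAbs = d →
    Relation.ReflTransGen (SOStep n M) x (Function.update x i t) := by
  induction d with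
  | zero =>
    intro x i j hij hj t ht
    have : t = x i := by omega
    subst this
    rw [Function.update_eq_self]
  | succ d ih =>
    intro x i j hij hj t ht
    have hne : t ≠ x i := by omega
    rcases lt_or_gt_of_ne hne with h | h
    · -- step down
      set x' := Function.update x i (x i - 1) with hx'
      have hx'j : x' j = x j := Function.update_of_ne hij _ _
      have hstep : SOStep n M x x' := by
        refine ⟨⟨j, hj⟩, ⟨j, by rw [hx'j]; exact hj⟩, i, Or.inr ?_⟩
        funext k
        by_cases hk : k = i <;>
          simp [hx', Function.update_apply, Pi.single_apply, hk]
      have hx'i : x' i = x i - 1 := Function.update_self _ _ _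
      have : Relation.ReflTransGen (SOStep n M) x' (Function.update x' i t) := by
        refine ih x' i j hij (by rw [hx'j]; exact hj) t (by rw [hx'i]; omega)
      rw [Function.update_idem] at this
      exact Relation.ReflTransGen.head hstep this
    · -- step up
      set x' := Function.update x i (x i + 1) with hx'
      have hx'j : x' j = x j := Function.update_of_ne hij _ _
      have hstep : SOStep n M x x' := by
        refine ⟨⟨j, hj⟩, ⟨j, by rw [hx'j]; exact hj⟩, i, Or.inl ?_⟩
        funext k
        by_cases hk : k = i <;>
          simp [hx', Function.update_apply, Pi.single_apply, hk]
      have hx'i : x' i = x i + 1 := Function.update_self _ _ _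
      have : Relation.ReflTransGen (SOStep n M) x' (Function.update x' i t) := by
        refine ih x' i j hij (by rw [hx'j]; exact hj) t (by rw [hx'i]; omega)
      rw [Function.update_idem] at this
      exact Relation.ReflTransGen.head hstep this

/-- Setting all the coordinates in a finite set `s` to the value `K`,
staying safe thanks to a coordinate `i ∉ s`. -/
lemma so_setcoords {n : ℕ} {M : ℤ} (K : ℤ) (hK : M < |K|) (s : Finset (Fin n)) :
    ∀ (x : Fin n → ℤ) (i : Fin n), i ∉ s → M < |x i| →
      Relation.ReflTransGen (SOStep n M) x (fun j => if j ∈ s then K else x j) := by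
  classical
  induction s using Finset.induction_on with
  | empty =>
    intro x i _ _
    simpa using Relation.ReflTransGen.refl
  | @insert a s ha ih =>
    intro x i hi hxi
    have hia : i ≠ a := fun h => hi (h ▸ Finset.mem_insert_self a s)
    have his : i ∉ s := fun h => hi (Finset.mem_insert_of_mem h)
    set y : Fin n → ℤ := fun j => if j ∈ s then K else x j with hy
    have h1 : Relation.ReflTransGen (SOStep n M) x y := ih x i his hxi
    have hyi : y i = x i := by simp [hy, his]
    have h2 : Relation.ReflTransGen (SOStep n M) y (Function.update y a K) := by
      refine so_move (K - y a).natAbs y a i hia (by rw [hyi]; exact hxi) K rfl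
    have h3 : Function.update y a K = fun j => if j ∈ insert a s then K else x j := by
      funext k
      by_cases hk : k = a
      · subst hk; simp [Function.update_self]
      · by_cases hks : k ∈ s <;>
          simp [Function.update_of_ne hk, hy, hks, hk, Finset.mem_insert]
    rw [h3] at h2
    exact h1.trans h2

/-- Connectivity of the safe region for `n ≥ 2`. -/
lemma so_connected {n : ℕ} {M : ℤ} (hn : 1 < n) (a b : Fin n → ℤ)
    (ha : ∃ i, M < |a i|) (hb : ∃ i, M < |b i|) :
    Relation.ReflTransGen (SOStep n M) a b := by
  classical
  haveI : Nontrivial (Fin n) := Fin.nontrivial_iff_two_le.mpr hn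
  set K : ℤ := |M| + 1 with hKdef
  have hK : M < |K| := by
    have h1 : M ≤ |M| := le_abs_self M
    have h2 : (0:ℤ) ≤ |M| := abs_nonneg M
    have : |K| = |M| + 1 := by rw [hKdef, abs_of_nonneg (by omega)]
    omega
  have half : ∀ x : Fin n → ℤ, (∃ i, M < |x i|) →
      Relation.ReflTransGen (SOStep n M) x (fun _ => K) := by
    intro x ⟨i, hxi⟩
    set s : Finset (Fin n) := Finset.univ.erase i with hs
    have hi : i ∉ s := Finset.notMem_erase i _
    have h1 := so_setcoords K hK s x i hi hxi
    set y : Fin n → ℤ := fun j => if j ∈ s then K else x j with hy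
    obtain ⟨j, hji⟩ := exists_ne i
    have hjs : j ∈ s := Finset.mem_erase.2 ⟨hji, Finset.mem_univ j⟩
    have hyj : y j = K := by simp [hy, hjs]
    have h2 : Relation.ReflTransGen (SOStep n M) y (Function.update y i K) :=
      so_move (K - y i).natAbs y i j hji (by rw [hyj]; exact hK) K rfl
    have h3 : Function.update y i K = fun _ => K := by
      funext k
      by_cases hk : k = i
      · subst hk; simp
      · have hks : k ∈ s := Finset.mem_erase.2 ⟨hk, Finset.mem_univ k⟩
        simp [Function.update_of_ne hk, hy, hks]
    rw [h3] at h2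
    exact h1.trans h2
  exact (half a ha).trans (@Std.Symm.symm _ _ (@Relation.ReflTransGen.stdSymm _ (SOStep n M) ⟨fun _ _ h => SOStep.symm_rel h⟩) _ _ (half b hb))

/-- Discrete intermediate value theorem along a safe chain. -/
lemma so_ivt {n : ℕ} {M : ℤ} {Φ : (Fin n → ℤ) → ℝ} {ε c : ℝ}
    (hstep : ∀ x y, SOStep n M x y → |Φ y - Φ x| < ε)
    {a b : Fin n → ℤ} (hab : Relation.ReflTransGen (SOStep n M) a b)
    (hsa : ∃ i, M < |a i|) (h1 : Φ a < c + ε) (h2 : c - ε < Φ b) :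
    ∃ x : Fin n → ℤ, (∃ i, M < |x i|) ∧ |Φ x - c| < ε := by
  revert h2
  induction hab with
  | refl =>
    intro h2
    exact ⟨a, hsa, abs_sub_lt_iff.2 ⟨by linarith, by linarith⟩⟩
  | @tail y z hay hyz ih =>
    intro h2
    by_cases hy : c - ε < Φ y
    · exact ih hy
    · push_neg at hy
      have hz : |Φ z - Φ y| < ε := hstep y z hyz
      have hz1 : Φ z < c + ε := by
        have := (abs_sub_lt_iff.1 hz).1
        linarith
      exact ⟨z, hyz.2.1, abs_sub_lt_iff.2 ⟨by linarith, by linarith⟩⟩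

/-- Any finite set of lattice points has uniformly bounded coordinates. -/
lemma so_bound {n : ℕ} {s : Set (Fin n → ℤ)} (hs : s.Finite) :
    ∃ N : ℕ, ∀ x ∈ s, ∀ i, |x i| ≤ (N : ℤ) := by
  classical
  refine ⟨hs.toFinset.sup (fun x => Finset.univ.sup fun i => (x i).natAbs), ?_⟩
  intro x hx i
  have h1 : (x i).natAbs ≤ Finset.univ.sup fun i => (x i).natAbs :=
    Finset.le_sup (f := fun i => (x i).natAbs) (Finset.mem_univ i)
  have h2 : (Finset.univ.sup fun i => (x i).natAbs) ≤
      hs.toFinset.sup (fun x => Finset.univ.sup fun i => (x i).natAbs) :=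
    Finset.le_sup (f := fun x => Finset.univ.sup fun i => (x i).natAbs)
      (hs.mem_toFinset.2 hx)
  rw [Int.abs_eq_natAbs]
  exact_mod_cast h1.trans h2

lemma so_box_finite {n : ℕ} (M : ℤ) : {x : Fin n → ℤ | ∀ i, |x i| ≤ M}.Finite := by
  have hsub : {x : Fin n → ℤ | ∀ i, |x i| ≤ M} ⊆
      Set.pi Set.univ (fun _ : Fin n => Set.Icc (-M) M) := by
    intro x hx i _
    exact abs_le.1 (hx i)
  exact (Set.Finite.pi fun _ => Set.finite_Icc _ _).subset hsub

/-- The key approximation lemma: every value in `[liminf, limsup]` is attained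
up to `ε` arbitrarily far from the origin. -/
lemma so_key {n : ℕ} (hn : 1 < n) {Φ : (Fin n → ℤ) → ℝ} {C : ℝ} (hbdd : ∀ x, |Φ x| ≤ C)
    (hso : ∀ y : Fin n → ℤ,
      Tendsto (fun x => Φ (x + y) - Φ x) cofinite (nhds 0))
    {c : ℝ} (hc1 : liminf Φ cofinite ≤ c) (hc2 : c ≤ limsup Φ cofinite)
    {ε : ℝ} (hε : 0 < ε) (m : ℕ) :
    ∃ x : Fin n → ℤ, (∃ i, (m : ℤ) < |x i|) ∧ |Φ x - c| < ε := by
  classical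
  haveI : Infinite (Fin n → ℤ) := by
    have h0 : (0 : ℕ) < n := by omega
    exact Infinite.of_injective (fun k : ℤ => fun _ : Fin n => k)
      (fun k l h => congrFun h ⟨0, h0⟩)
  -- the bad set where unit steps change Φ by at least ε
  set Bad : Set (Fin n → ℤ) :=
    ⋃ i : Fin n, {x | ¬ |Φ (x + Pi.single i 1) - Φ x| < ε} with hBadDef
  have hBadFin : Bad.Finite := by
    refine Set.finite_iUnion fun i => ?_
    have h := hso (Pi.single i 1)
    rw [Metric.tendsto_nhds] at h
    have h' := h ε hε
    simp only [Real.dist_eq, sub_zero] at h'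
    exact eventually_cofinite.mp h'
  obtain ⟨N, hN⟩ := so_bound hBadFin
  set M : ℤ := max (m : ℤ) (N : ℤ) with hM
  have hmM : (m : ℤ) ≤ M := le_max_left _ _
  have hNM : (N : ℤ) ≤ M := le_max_right _ _
  have hsafe_not_bad : ∀ x : Fin n → ℤ, (∃ i, M < |x i|) → x ∉ Bad := by
    rintro x ⟨i, hi⟩ hx
    exact absurd ((hN x hx i).trans hNM) (not_le.2 hi)
  have hstep : ∀ x y, SOStep n M x y → |Φ y - Φ x| < ε := by
    rintro x y ⟨hx, hy, i, h | h⟩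
    · have := hsafe_not_bad x hx
      simp only [hBadDef, Set.mem_iUnion, Set.mem_setOf_eq, not_exists, not_not] at this
      rw [h]; exact this i
    · have := hsafe_not_bad y hy
      simp only [hBadDef, Set.mem_iUnion, Set.mem_setOf_eq, not_exists, not_not] at this
      rw [abs_sub_comm, h]; exact this i
  -- unsafe points form a finite set
  have hUfin : {x : Fin n → ℤ | ¬ ∃ i, M < |x i|}.Finite := by
    have : {x : Fin n → ℤ | ¬ ∃ i, M < |x i|} = {x | ∀ i, |x i| ≤ M} := by
      ext x; simp [not_lt]
    rw [this]; exact so_box_finite M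
  have hbddle : IsBoundedUnder (· ≤ ·) (cofinite : Filter (Fin n → ℤ)) Φ :=
    isBoundedUnder_of ⟨C, fun x => (abs_le.1 (hbdd x)).2⟩
  have hbddge : IsBoundedUnder (· ≥ ·) (cofinite : Filter (Fin n → ℤ)) Φ :=
    isBoundedUnder_of ⟨-C, fun x => (abs_le.1 (hbdd x)).1⟩
  -- a point with small value
  have hfreq1 : ∃ᶠ x in cofinite, Φ x < c + ε :=
    frequently_lt_of_liminf_lt hbddle.isCoboundedUnder_ge (by linarith)
  have hfreq2 : ∃ᶠ x in cofinite, c - ε < Φ x :=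
    frequently_lt_of_lt_limsup hbddge.isCoboundedUnder_le (by linarith)
  rw [frequently_cofinite_iff_infinite] at hfreq1 hfreq2
  obtain ⟨a, ha1, ha2⟩ := (hfreq1.diff hUfin).nonempty
  obtain ⟨b, hb1, hb2⟩ := (hfreq2.diff hUfin).nonempty
  rw [Set.mem_setOf_eq, not_not] at ha2 hb2
  obtain ⟨x, hxsafe, hxc⟩ :=
    so_ivt hstep (so_connected hn a b ha2 hb2) ha2 ha1 hb1
  obtain ⟨i, hi⟩ := hxsafe
  exact ⟨x, ⟨i, lt_of_le_of_lt hmM hi⟩, hxc⟩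

theorem partial_limits_slowly_oscillating (n : ℕ) (hn : 1 < n)
    (Φ : (Fin n → ℤ) → ℝ) (C : ℝ) (hbdd : ∀ x, |Φ x| ≤ C)
    (hso : ∀ y : Fin n → ℤ,
      Tendsto (fun x => Φ (x + y) - Φ x) cofinite (nhds 0)) :
    {c : ℝ | ∃ g : ℕ → Fin n → ℤ, Tendsto g atTop cofinite ∧
        Tendsto (fun m => Φ (g m)) atTop (nhds c)}
      = Set.Icc (liminf Φ cofinite) (limsup Φ cofinite) := by
  classical
  haveI : Infinite (Fin n → ℤ) := by
    have h0 : (0 : ℕ) < n := by omega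
    exact Infinite.of_injective (fun k : ℤ => fun _ : Fin n => k)
      (fun k l h => congrFun h ⟨0, h0⟩)
  have hbddle : IsBoundedUnder (· ≤ ·) (cofinite : Filter (Fin n → ℤ)) Φ :=
    isBoundedUnder_of ⟨C, fun x => (abs_le.1 (hbdd x)).2⟩
  have hbddge : IsBoundedUnder (· ≥ ·) (cofinite : Filter (Fin n → ℤ)) Φ :=
    isBoundedUnder_of ⟨-C, fun x => (abs_le.1 (hbdd x)).1⟩
  ext c
  simp only [Set.mem_setOf_eq, Set.mem_Icc]
  constructor
  · rintro ⟨g, hg, hgc⟩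
    have hle : (map g atTop : Filter (Fin n → ℤ)) ≤ cofinite := hg
    have hmapbddle : IsBoundedUnder (· ≤ ·) (map g atTop) Φ :=
      isBoundedUnder_of ⟨C, fun x => (abs_le.1 (hbdd x)).2⟩
    have hmapbddge : IsBoundedUnder (· ≥ ·) (map g atTop) Φ :=
      isBoundedUnder_of ⟨-C, fun x => (abs_le.1 (hbdd x)).1⟩
    have hliminfmap : liminf Φ (map g atTop) = c := by
      rw [← liminf_comp]
      exact hgc.liminf_eq
    have hlimsupmap : limsup Φ (map g atTop) = c := by
      rw [← limsup_comp]
      exact hgc.limsup_eq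
    constructor
    · have := liminf_le_liminf_of_le hle hbddge hmapbddle.isCoboundedUnder_ge
      rwa [hliminfmap] at this
    · have := limsup_le_limsup_of_le hle hmapbddge.isCoboundedUnder_le hbddle
      rwa [hlimsupmap] at this
  · rintro ⟨hc1, hc2⟩
    have key : ∀ m : ℕ, ∃ x : Fin n → ℤ,
        (∃ i, (m : ℤ) < |x i|) ∧ |Φ x - c| < 1 / ((m : ℝ) + 1) := by
      intro m
      exact so_key hn hbdd hso hc1 hc2
        (by positivity) m
    choose g hg1 hg2 using key
    refine ⟨g, ?_, ?_⟩
    · intro s hs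
      rw [mem_cofinite] at hs
      obtain ⟨N, hN⟩ := so_bound hs
      rw [mem_map]
      filter_upwards [eventually_ge_atTop (N + 1)] with m hm
      by_contra hmem
      obtain ⟨i, hi⟩ := hg1 m
      have h1 : |g m i| ≤ (N : ℤ) := hN (g m) hmem i
      have h2 : ((N : ℤ) + 1) ≤ (m : ℤ) := by exact_mod_cast hm
      omega
    · rw [tendsto_iff_dist_tendsto_zero]
      refine squeeze_zero (fun m => dist_nonneg) (fun m => ?_)
        tendsto_one_div_add_atTop_nhds_zero_nat
      rw [Real.dist_eq]
      exact le_of_lt (hg2 m)
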